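/- Let a ∈ ℝ³ be a unit vector, Θ ∈ (0, π/2), and let V = {z ∈ ℝ³ : ⟪z, a⟫ > ‖z‖·cos Θ} ∩ B, where B is an open ball centered at the origin with positive radius R. Then for every unit vector b ∈ ℝ³, the extended-real Lebesgue integral ∫_V ⟪∇G(z), b⟫² dz equals +∞; equivalently, since ∇G(z) = −z/(4π‖z‖³), the function z ↦ ⟪z, b⟫²/(16π²‖z‖⁶) is not Lebesgue integrable on V and its integral diverges to +∞. (Lemma A of the paper.) -/

import Mathlib

set_option maxHeartbeats 1000000

open MeasureTheory Filter
open scoped ENNReal Topology Pointwise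

private lemma exists_good_dir (a b : EuclideanSpace ℝ (Fin 3)) (ha : ‖a‖ = 1) (hb : ‖b‖ = 1)
    (Θ : ℝ) (hΘ : Θ ∈ Set.Ioo 0 (Real.pi / 2)) :
    ∃ u : EuclideanSpace ℝ (Fin 3),
      ‖u‖ = 1 ∧ Real.cos Θ < (inner ℝ u a : ℝ) ∧ (inner ℝ u b : ℝ) ≠ 0 := by
  obtain ⟨hΘ1, hΘ2⟩ := hΘ
  have hπ := Real.pi_pos
  by_cases hab : (inner ℝ a b : ℝ) = 0
  · refine ⟨Real.cos (Θ/2) • a + Real.sin (Θ/2) • b, ?_, ?_, ?_⟩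
    · have hn2 : ‖Real.cos (Θ/2) • a + Real.sin (Θ/2) • b‖ ^ 2 = 1 := by
        rw [norm_add_sq_real]
        simp only [norm_smul, real_inner_smul_left, real_inner_smul_right, hab, ha, hb,
          Real.norm_eq_abs, mul_zero, mul_one]
        rw [sq_abs, sq_abs, add_zero]
        exact Real.cos_sq_add_sin_sq (Θ/2)
      have h0 : (‖Real.cos (Θ/2) • a + Real.sin (Θ/2) • b‖ - 1) *
          (‖Real.cos (Θ/2) • a + Real.sin (Θ/2) • b‖ + 1) = 0 := by nlinarith [hn2]
      rcases mul_eq_zero.1 h0 with h | h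
      · linarith
      · nlinarith [norm_nonneg (Real.cos (Θ/2) • a + Real.sin (Θ/2) • b)]
    · have hinner : (inner ℝ (Real.cos (Θ/2) • a + Real.sin (Θ/2) • b) a : ℝ)
          = Real.cos (Θ/2) := by
        rw [inner_add_left, real_inner_smul_left, real_inner_smul_left,
          real_inner_self_eq_norm_sq, real_inner_comm, hab, ha]
        ring
      rw [hinner]
      exact Real.cos_lt_cos_of_nonneg_of_le_pi (by linarith) (by linarith) (by linarith)
    · have hinner : (inner ℝ (Real.cos (Θ/2) • a + Real.sin (Θ/2) • b) b : ℝ)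
          = Real.sin (Θ/2) := by
        rw [inner_add_left, real_inner_smul_left, real_inner_smul_left,
          real_inner_self_eq_norm_sq, hab, hb]
        ring
      rw [hinner]
      exact ne_of_gt (Real.sin_pos_of_pos_of_lt_pi (by linarith) (by linarith))
  · refine ⟨a, ha, ?_, by rwa [real_inner_comm] at hab ⊢⟩
    · rw [real_inner_self_eq_norm_sq, ha]
      have : Real.cos Θ < Real.cos 0 :=
        Real.cos_lt_cos_of_nonneg_of_le_pi le_rfl (by linarith) hΘ1
      simpa using this

/-- The key pointwise geometric estimate on a narrow subcone. -/
private lemma cone_estimates (a b u : EuclideanSpace ℝ (Fin 3)) (ha : ‖a‖ = 1) (hb : ‖b‖ = 1)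
    (hu : ‖u‖ = 1) {Θ ε : ℝ} (hε : 0 < ε) (hεd : ε ≤ (inner ℝ u a : ℝ) - Real.cos Θ)
    (hεc : ε ≤ |(inner ℝ u b : ℝ)| / 2)
    {z : EuclideanSpace ℝ (Fin 3)} (hz : (1 - ε^2/2) * ‖z‖ < (inner ℝ z u : ℝ)) :
    ‖z‖ * Real.cos Θ < (inner ℝ z a : ℝ) ∧
      (|(inner ℝ u b : ℝ)| / 2)^2 * ‖z‖^2 ≤ (inner ℝ z b : ℝ)^2 := by
  have hzne : z ≠ 0 := by
    rintro rfl
    simp at hz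
  have hznorm : 0 < ‖z‖ := norm_pos_iff.2 hzne
  set w : EuclideanSpace ℝ (Fin 3) := z - ‖z‖ • u with hw
  have hwle : ‖w‖ < ε * ‖z‖ := by
    have h1 : ‖w‖ ^ 2 = ‖z‖^2 - 2 * (‖z‖ * (inner ℝ z u : ℝ)) + ‖z‖^2 := by
      rw [hw, norm_sub_sq_real, real_inner_smul_right, norm_smul, Real.norm_eq_abs,
        abs_of_nonneg hznorm.le, mul_pow, hu]
      ring
    have h2 : ‖w‖^2 < (ε * ‖z‖)^2 := by nlinarith [hz, hznorm]
    nlinarith [norm_nonneg w, mul_pos hε hznorm]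
  have hinner_a : (inner ℝ z a : ℝ) = ‖z‖ * (inner ℝ u a : ℝ) + (inner ℝ w a : ℝ) := by
    rw [hw, inner_sub_left, real_inner_smul_left]
    ring
  have hinner_b : (inner ℝ z b : ℝ) = ‖z‖ * (inner ℝ u b : ℝ) + (inner ℝ w b : ℝ) := by
    rw [hw, inner_sub_left, real_inner_smul_left]
    ring
  have hwa : |(inner ℝ w a : ℝ)| ≤ ‖w‖ := by
    calc |(inner ℝ w a : ℝ)| ≤ ‖w‖ * ‖a‖ := abs_real_inner_le_norm w a
    _ = ‖w‖ := by rw [ha, mul_one]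
  have hwb : |(inner ℝ w b : ℝ)| ≤ ‖w‖ := by
    calc |(inner ℝ w b : ℝ)| ≤ ‖w‖ * ‖b‖ := abs_real_inner_le_norm w b
    _ = ‖w‖ := by rw [hb, mul_one]
  constructor
  · have h1 : (inner ℝ z a : ℝ) > ‖z‖ * (inner ℝ u a : ℝ) - ε * ‖z‖ := by
      have := abs_le.1 hwa
      nlinarith [hwle]
    nlinarith [hεd, hznorm]
  · have hc : 0 ≤ |(inner ℝ u b : ℝ)| / 2 := by positivity
    have h2 : ‖z‖ * |(inner ℝ u b : ℝ)| ≤ |(inner ℝ z b : ℝ)| + |(inner ℝ w b : ℝ)| := by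
      have hx : ‖z‖ * (inner ℝ u b : ℝ) = (inner ℝ z b : ℝ) - (inner ℝ w b : ℝ) := by
        rw [hinner_b]; ring
      calc ‖z‖ * |(inner ℝ u b : ℝ)| = |‖z‖ * (inner ℝ u b : ℝ)| := by
            rw [abs_mul, abs_of_nonneg hznorm.le]
      _ = |(inner ℝ z b : ℝ) - (inner ℝ w b : ℝ)| := by rw [hx]
      _ ≤ _ := abs_sub _ _
    have h1 : |(inner ℝ u b : ℝ)| / 2 * ‖z‖ ≤ |(inner ℝ z b : ℝ)| := by
      nlinarith [h2, hwb, hwle, mul_le_mul_of_nonneg_right hεc hznorm.le]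
    calc (|(inner ℝ u b : ℝ)| / 2)^2 * ‖z‖^2 = (|(inner ℝ u b : ℝ)| / 2 * ‖z‖)^2 := by ring
    _ ≤ |(inner ℝ z b : ℝ)|^2 := by
        apply pow_le_pow_left₀ (by positivity) h1
    _ = (inner ℝ z b : ℝ)^2 := sq_abs _

theorem lemmaA (a b : EuclideanSpace ℝ (Fin 3)) (ha : ‖a‖ = 1) (hb : ‖b‖ = 1)
    (Θ R : ℝ) (hΘ : Θ ∈ Set.Ioo 0 (Real.pi / 2)) (hR : 0 < R) :
    ∫⁻ z in {z : EuclideanSpace ℝ (Fin 3) | (inner ℝ z a : ℝ) > ‖z‖ * Real.cos Θ}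
        ∩ Metric.ball (0 : EuclideanSpace ℝ (Fin 3)) R,
      ENNReal.ofReal ((inner ℝ z b : ℝ) ^ 2 / (16 * Real.pi ^ 2 * ‖z‖ ^ 6)) = ⊤ := by
  obtain ⟨u, hu, hua, hub⟩ := exists_good_dir a b ha hb Θ hΘ
  set c : ℝ := |(inner ℝ u b : ℝ)| with hcdef
  have hc0 : 0 < c := abs_pos.2 hub
  set ε : ℝ := min ((inner ℝ u a : ℝ) - Real.cos Θ) (c / 2) with hεdef
  have hε0 : 0 < ε := lt_min (by linarith) (by linarith)
  set t : ℝ := 1 - ε ^ 2 / 2 with htdef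
  have ht1 : t < 1 := by rw [htdef]; nlinarith
  -- the key pointwise estimates
  have key : ∀ z : EuclideanSpace ℝ (Fin 3), t * ‖z‖ < (inner ℝ z u : ℝ) →
      ‖z‖ * Real.cos Θ < (inner ℝ z a : ℝ) ∧ (c / 2) ^ 2 * ‖z‖ ^ 2 ≤ (inner ℝ z b : ℝ) ^ 2 := by
    intro z hz
    exact cone_estimates a b u ha hb hu hε0 (min_le_left _ _) (min_le_right _ _)
      (by rw [htdef] at hz; exact hz)
  -- the annular pieces of the narrow subcone
  set S : ℕ → Set (EuclideanSpace ℝ (Fin 3)) := fun n =>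
    {z | t * ‖z‖ < (inner ℝ z u : ℝ)} ∩ {z | R / 2 ^ (n + 1) ≤ ‖z‖ ∧ ‖z‖ < R / 2 ^ n} with hSdef
  have hWopen : IsOpen {z : EuclideanSpace ℝ (Fin 3) | t * ‖z‖ < (inner ℝ z u : ℝ)} :=
    isOpen_lt (continuous_const.mul continuous_norm) (continuous_id.inner continuous_const)
  have hSmeas : ∀ n, MeasurableSet (S n) := by
    intro n
    apply hWopen.measurableSet.inter
    have : {z : EuclideanSpace ℝ (Fin 3) | R / 2 ^ (n + 1) ≤ ‖z‖ ∧ ‖z‖ < R / 2 ^ n}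
        = (fun z : EuclideanSpace ℝ (Fin 3) => ‖z‖) ⁻¹' Set.Ico (R / 2 ^ (n + 1)) (R / 2 ^ n) :=
      rfl
    rw [this]
    exact measurable_norm measurableSet_Ico
  -- pieces sit inside the cone-ball region
  have hSsub : ∀ n, S n ⊆ {z : EuclideanSpace ℝ (Fin 3) | (inner ℝ z a : ℝ) > ‖z‖ * Real.cos Θ}
      ∩ Metric.ball (0 : EuclideanSpace ℝ (Fin 3)) R := by
    intro n z hz
    obtain ⟨hzW, hzlo, hzhi⟩ := hz
    refine ⟨(key z hzW).1, ?_⟩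
    rw [mem_ball_zero_iff]
    have h2 : (1 : ℝ) ≤ 2 ^ n := one_le_pow₀ (by norm_num)
    have : R / 2 ^ n ≤ R := div_le_self hR.le h2
    linarith
  -- disjointness
  have hdisj' : ∀ m n, m < n → Disjoint (S m) (S n) := by
    intro m n h
    rw [Set.disjoint_left]
    rintro z ⟨-, hlo, hhi⟩ ⟨-, hlo', hhi'⟩
    have hmono : R / 2 ^ n ≤ R / 2 ^ (m + 1) :=
      div_le_div_of_nonneg_left hR.le (by positivity) (pow_le_pow_right₀ one_le_two (by omega))
    linarith
  have hdisj : Pairwise (Function.onFun Disjoint S) := by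
    intro m n hmn
    rcases lt_or_gt_of_ne hmn with h | h
    · exact hdisj' m n h
    · exact (hdisj' n m h).symm
  -- scaling
  have hscale : ∀ n : ℕ, S n = ((1 / 2 : ℝ) ^ n) • S 0 := by
    intro n
    ext z
    rw [Set.mem_smul_set_iff_inv_smul_mem₀ (by positivity)]
    have hxn : ((1 / 2 : ℝ) ^ n)⁻¹ = (2 : ℝ) ^ n := by
      rw [one_div, inv_pow, inv_inv]
    rw [hxn]
    have hnorm : ‖((2 : ℝ) ^ n) • z‖ = 2 ^ n * ‖z‖ := by
      rw [norm_smul, Real.norm_eq_abs, abs_of_pos (by positivity)]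
    have hinner : (inner ℝ (((2 : ℝ) ^ n) • z) u : ℝ) = 2 ^ n * (inner ℝ z u : ℝ) :=
      real_inner_smul_left z u _
    simp only [hSdef, Set.mem_inter_iff, Set.mem_setOf_eq, hnorm, hinner, pow_zero, pow_one,
      div_one]
    have hp : (0 : ℝ) < 2 ^ n := by positivity
    have e1 : t * (2 ^ n * ‖z‖) < 2 ^ n * (inner ℝ z u : ℝ) ↔ t * ‖z‖ < (inner ℝ z u : ℝ) := by
      rw [show t * (2 ^ n * ‖z‖) = 2 ^ n * (t * ‖z‖) by ring]
      exact mul_lt_mul_iff_right₀ hp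
    have e2 : R / 2 ^ (0 + 1) ≤ 2 ^ n * ‖z‖ ↔ R / 2 ^ (n + 1) ≤ ‖z‖ := by
      rw [div_le_iff₀ (by positivity), div_le_iff₀ (by positivity), pow_succ, pow_succ]
      constructor <;> intro h <;> nlinarith
    have e3 : 2 ^ n * ‖z‖ < R ↔ ‖z‖ < R / 2 ^ n := by
      rw [lt_div_iff₀ hp, mul_comm]
    rw [e1, e2, e3]
  -- positive measure of the base piece
  have hμ0 : 0 < volume (S 0) := by
    set O : Set (EuclideanSpace ℝ (Fin 3)) :=
      {z | t * ‖z‖ < (inner ℝ z u : ℝ)} ∩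
        (Metric.ball (0 : EuclideanSpace ℝ (Fin 3)) R \ Metric.closedBall (0 : EuclideanSpace ℝ (Fin 3)) (R / 2)) with hOdef
    have hO : IsOpen O := by
      apply hWopen.inter
      rw [Set.diff_eq]
      exact Metric.isOpen_ball.inter Metric.isClosed_closedBall.isOpen_compl
    have hxO : ((3 * R / 4 : ℝ) • u) ∈ O := by
      have hnorm : ‖(3 * R / 4 : ℝ) • u‖ = 3 * R / 4 := by
        rw [norm_smul, Real.norm_eq_abs, abs_of_pos (by linarith), hu, mul_one]
      refine ⟨?_, ?_, ?_⟩
      · show t * ‖(3 * R / 4 : ℝ) • u‖ < (inner ℝ ((3 * R / 4 : ℝ) • u) u : ℝ)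
        rw [hnorm, real_inner_smul_left, real_inner_self_eq_norm_sq, hu]
        nlinarith [mul_pos (by linarith : (0:ℝ) < 1 - t) (by linarith : (0:ℝ) < 3 * R / 4)]
      · rw [mem_ball_zero_iff, hnorm]; linarith
      · rw [Metric.mem_closedBall, dist_zero_right, hnorm]; push_neg; linarith
    have hOsub : O ⊆ S 0 := by
      rintro z ⟨hzW, hz1, hz2⟩
      rw [mem_ball_zero_iff] at hz1
      rw [Metric.mem_closedBall, dist_zero_right] at hz2
      push_neg at hz2
      exact ⟨hzW, by rw [pow_one]; linarith, by rw [pow_zero, div_one]; linarith⟩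
    exact lt_of_lt_of_le (hO.measure_pos volume ⟨_, hxO⟩) (measure_mono hOsub)
  -- measures of the pieces
  have hSn : ∀ n : ℕ, volume (S n) = ENNReal.ofReal (((1 / 2 : ℝ) ^ n) ^ 3) * volume (S 0) := by
    intro n
    rw [hscale n, Measure.addHaar_smul_of_nonneg volume (by positivity) (S 0),
      finrank_euclideanSpace_fin]
  -- the constant lower bound for each piece
  set C : ℝ≥0∞ := ENNReal.ofReal ((c / 2) ^ 2 / (16 * Real.pi ^ 2 * R ^ 4)) * volume (S 0)
    with hCdef
  have hπ := Real.pi_pos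
  have hC0 : C ≠ 0 := by
    apply mul_ne_zero
    · rw [ne_eq, ENNReal.ofReal_eq_zero, not_le]
      apply div_pos (by positivity) (by positivity)
    · exact hμ0.ne'
  have hterm : ∀ n : ℕ, C ≤ ∫⁻ z in S n,
      ENNReal.ofReal ((inner ℝ z b : ℝ) ^ 2 / (16 * Real.pi ^ 2 * ‖z‖ ^ 6)) := by
    intro n
    set Kn : ℝ := (c / 2) ^ 2 * ((2 : ℝ) ^ n) ^ 4 / (16 * Real.pi ^ 2 * R ^ 4) with hKndef
    have hq : ((1 / 2 : ℝ) ^ n) ^ 3 * ((2 : ℝ) ^ n) ^ 4 = 2 ^ n := by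
      have h : ((1 / 2 : ℝ) * 2) ^ n = 1 := by norm_num
      calc ((1 / 2 : ℝ) ^ n) ^ 3 * ((2 : ℝ) ^ n) ^ 4
          = (((1 / 2 : ℝ) * 2) ^ n) ^ 3 * (2 : ℝ) ^ n := by rw [mul_pow]; ring
      _ = 2 ^ n := by rw [h]; ring
    have h2n : (1 : ℝ) ≤ 2 ^ n := one_le_pow₀ (by norm_num)
    calc C ≤ ENNReal.ofReal (Kn * ((1 / 2 : ℝ) ^ n) ^ 3) * volume (S 0) := by
          apply mul_le_mul_left
          apply ENNReal.ofReal_le_ofReal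
          have heq : Kn * ((1 / 2 : ℝ) ^ n) ^ 3
              = (c / 2) ^ 2 * (((1 / 2 : ℝ) ^ n) ^ 3 * ((2 : ℝ) ^ n) ^ 4)
                / (16 * Real.pi ^ 2 * R ^ 4) := by rw [hKndef]; ring
          rw [heq, hq, div_le_div_iff₀ (by positivity) (by positivity)]
          nlinarith [mul_le_mul_of_nonneg_left h2n
            (by positivity : (0:ℝ) ≤ (c / 2) ^ 2 * (16 * Real.pi ^ 2 * R ^ 4))]
    _ = ENNReal.ofReal Kn * volume (S n) := by
          rw [ENNReal.ofReal_mul (by positivity), hSn n, mul_assoc]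
    _ = ∫⁻ _ in S n, ENNReal.ofReal Kn := (setLIntegral_const _ _).symm
    _ ≤ ∫⁻ z in S n, ENNReal.ofReal ((inner ℝ z b : ℝ) ^ 2 / (16 * Real.pi ^ 2 * ‖z‖ ^ 6)) := by
          apply setLIntegral_mono' (hSmeas n)
          rintro z ⟨hzW, hzlo, hzhi⟩
          apply ENNReal.ofReal_le_ofReal
          have hz0 : 0 < ‖z‖ := lt_of_lt_of_le (by positivity) hzlo
          have hzb := (key z hzW).2
          have hle : (2 : ℝ) ^ n * ‖z‖ ≤ R := by
            have := (lt_div_iff₀ (by positivity : (0:ℝ) < (2:ℝ) ^ n)).1 hzhi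
            nlinarith
          have h5 : ((2 : ℝ) ^ n * ‖z‖) ^ 4 ≤ R ^ 4 := pow_le_pow_left₀ (by positivity) hle 4
          rw [hKndef, div_le_div_iff₀ (by positivity) (by positivity)]
          nlinarith [mul_le_mul_of_nonneg_left h5
              (by positivity : (0:ℝ) ≤ 16 * Real.pi ^ 2 * (c / 2) ^ 2 * ‖z‖ ^ 2),
            mul_le_mul_of_nonneg_right hzb
              (by positivity : (0:ℝ) ≤ 16 * Real.pi ^ 2 * R ^ 4)]
  -- put it all together
  refine top_le_iff.1 ?_
  calc (⊤ : ℝ≥0∞) = ∑' _ : ℕ, C := (ENNReal.tsum_const_eq_top_of_ne_zero hC0).symm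
  _ ≤ ∑' n : ℕ, ∫⁻ z in S n,
        ENNReal.ofReal ((inner ℝ z b : ℝ) ^ 2 / (16 * Real.pi ^ 2 * ‖z‖ ^ 6)) :=
      ENNReal.tsum_le_tsum hterm
  _ = ∫⁻ z in ⋃ n, S n,
        ENNReal.ofReal ((inner ℝ z b : ℝ) ^ 2 / (16 * Real.pi ^ 2 * ‖z‖ ^ 6)) :=
      (lintegral_iUnion hSmeas hdisj _).symm
  _ ≤ _ := lintegral_mono_set (Set.iUnion_subset hSsub)
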